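/- Let A be a unital normed ℂ-algebra with submultiplicative norm and ω : A → ℂ a linear functional with |ω(a)| ≤ ‖a‖ for all a. Let n ≥ 1, let a₁,…,aₙ ∈ ker ω, and let X be a finite set with |X| ≥ n. Then |M_X(a₁,…,aₙ) − (∏_{l=0}^{n/2−1}(1 − l/|X|))·Q(a₁,…,aₙ)| ≤ |X|^{−1/2} · ‖a₁‖⋯‖aₙ‖ · ∑_{k=1}^{n} S(k,n)·[2k+1 ≤ n], where [2k+1 ≤ n] is 1 if 2k+1 ≤ n and 0 otherwise, and for odd n the product-term coefficient multiplies Q = 0. -/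

import Mathlib

open scoped BigOperators

/-- The cluster operator `a^x_y := ∏_{i ∈ x⁻¹(y)} a_i`, the product being taken in
increasing order of the index `i`. -/
def clusterOp {A : Type*} [Monoid A] {X : Type*} [DecidableEq X] {n : ℕ}
    (a : Fin n → A) (x : Fin n → X) (y : X) : A :=
  (((List.finRange n).filter (fun i => decide (x i = y))).map a).prod

/-- The product-state fluctuation moment
`M_X(a₁,…,aₙ) := |X|^{−n/2} ∑_{x : Fin n → X} ∏_{y ∈ im(x)} ω(a^x_y)`. -/
noncomputable def prodMoment {A : Type*} [NormedRing A] [NormedAlgebra ℂ A]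
    {X : Type*} [Fintype X] [DecidableEq X] (ω : A →ₗ[ℂ] ℂ) {n : ℕ} (a : Fin n → A) : ℂ :=
  (((Fintype.card X : ℝ) ^ (-(n : ℝ) / 2) : ℝ) : ℂ) *
    ∑ x : Fin n → X, ∏ y ∈ Finset.image x Finset.univ, ω (clusterOp a x y)

/-- The quasi-free (pair-partition) value
`Q(a₁,…,aₙ) := ∑_{P ∈ Π₂(n)} ∏_{{i,j} ∈ P, i<j} ω(a_i·a_j)`, with pair partitions encoded
as fixed-point-free involutions of `Fin n`; for odd `n` there are no such involutions and
the value is `0`. -/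
noncomputable def qfValue {A : Type*} [NormedRing A] [NormedAlgebra ℂ A]
    (ω : A →ₗ[ℂ] ℂ) {n : ℕ} (a : Fin n → A) : ℂ :=
  ∑ σ ∈ Finset.univ.filter (fun σ : Equiv.Perm (Fin n) => σ * σ = 1 ∧ ∀ i, σ i ≠ i),
    ∏ i ∈ Finset.univ.filter (fun i : Fin n => i < σ i), ω (a i * a (σ i))

/-- Stirling numbers of the second kind: `stirling n k` is the number of partitions of an
`n`-element set into `k` nonempty blocks, via the standard recurrence. -/
def stirling : ℕ → ℕ → ℕ
  | 0, 0 => 1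
  | 0, _ + 1 => 0
  | _ + 1, 0 => 0
  | n + 1, k + 1 => (k + 1) * stirling n (k + 1) + stirling n k



set_option linter.unusedSectionVars false
section AuxStmt12
open Finset



lemma filter_eq_nil' {α} (l : List α) (p : α → Bool) (h : ∀ x ∈ l, ¬ p x = true) :
    l.filter p = [] := by
  rw [List.filter_eq_nil_iff]; exact h

lemma filter_single {α} (l : List α) (p : α → Bool) (i : α) (hl : l.Nodup)
    (hp : ∀ k ∈ l, (p k = true ↔ k = i)) (hi : i ∈ l) : l.filter p = [i] := by
  induction l with
  | nil => simp at hi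
  | cons b t ih =>
    rcases List.mem_cons.1 hi with rfl | hit
    · rw [List.filter_cons_of_pos (by simp [hp i (by simp)])]
      have : t.filter p = [] := by
        refine filter_eq_nil' _ _ fun x hx hpx => ?_
        have := (hp x (by simp [hx])).1 hpx
        subst this; exact (List.nodup_cons.1 hl).1 hx
      simp [this]
    · have hbi : b ≠ i := fun h => (List.nodup_cons.1 hl).1 (h ▸ hit)
      rw [List.filter_cons_of_neg (by simp [hp b (by simp), hbi])]
      exact ih (List.nodup_cons.1 hl).2 (fun k hk => hp k (by simp [hk])) hit

lemma filter_pair {α} [LinearOrder α] (l : List α) (p : α → Bool) (i j : α)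
    (hl : List.Pairwise (· < ·) l) (hij : i < j)
    (hp : ∀ k ∈ l, (p k = true ↔ (k = i ∨ k = j))) (hi : i ∈ l) (hj : j ∈ l) :
    l.filter p = [i, j] := by
  induction l with
  | nil => simp at hi
  | cons b t ih =>
    have hlt := List.pairwise_cons.1 hl
    rcases List.mem_cons.1 hi with rfl | hit
    · rw [List.filter_cons_of_pos (by simp [hp i (by simp)])]
      have hjt : j ∈ t := by
        rcases List.mem_cons.1 hj with h | h
        · exact absurd h hij.ne'
        · exact h
      have : t.filter p = [j] := by
        refine filter_single t p j hlt.2.nodup ?_ hjt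
        intro k hk
        have hik : i < k := hlt.1 k hk
        refine (hp k (by simp [hk])).trans ⟨?_, Or.inr⟩
        rintro (rfl | h)
        · exact absurd hik (lt_irrefl _)
        · exact h
      simp [this]
    · have hbi' : b < i := hlt.1 i hit
      have hjt : j ∈ t := by
        rcases List.mem_cons.1 hj with h | h
        · exact absurd (hbi'.trans hij) (by rw [h]; exact lt_irrefl b)
        · exact h
      rw [List.filter_cons_of_neg
        (by simp [hp b (by simp), hbi'.ne, (hlt.1 j hjt).ne])]
      exact ih hlt.2 (fun k hk => hp k (by simp [hk])) hit hjt


lemma clusterOp_single {A : Type*} [Monoid A] {X : Type*} [DecidableEq X] {n : ℕ}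
    (a : Fin n → A) (x : Fin n → X) (y : X) (i : Fin n)
    (h : univ.filter (fun k => x k = y) = {i}) : clusterOp a x y = a i := by
  unfold clusterOp
  rw [filter_single (List.finRange n) _ i (List.nodup_finRange n) ?_ (List.mem_finRange i)]
  · simp
  · intro k _
    have := Finset.ext_iff.1 h k
    simpa using this

lemma clusterOp_pair {A : Type*} [Monoid A] {X : Type*} [DecidableEq X] {n : ℕ}
    (a : Fin n → A) (x : Fin n → X) (y : X) (i j : Fin n) (hij : i < j)
    (h : univ.filter (fun k => x k = y) = {i, j}) : clusterOp a x y = a i * a j := by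
  unfold clusterOp
  rw [filter_pair (List.finRange n) _ i j (List.pairwise_lt_finRange n) hij ?_
    (List.mem_finRange i) (List.mem_finRange j)]
  · simp
  · intro k _
    have := Finset.ext_iff.1 h k
    simpa using this

lemma prod_filter_finRange {n : ℕ} {M} [CommMonoid M] (p : Fin n → Bool) (f : Fin n → M) :
    ((((List.finRange n).filter p)).map f).prod = ∏ i ∈ univ.filter (fun i => p i = true), f i := by
  rw [← List.prod_toFinset f ((List.nodup_finRange n).filter p)]
  congr 1
  ext k
  simp [List.mem_filter]

lemma norm_clusterOp_le {A : Type*} [NormedRing A] {X : Type*} [DecidableEq X] {n : ℕ}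
    (a : Fin n → A) (x : Fin n → X) (y : X) (i : Fin n) (hi : x i = y) :
    ‖clusterOp a x y‖ ≤ ∏ k ∈ univ.filter (fun k => x k = y), ‖a k‖ := by
  have hmem : i ∈ (List.finRange n).filter (fun k => decide (x k = y)) := by
    simp [List.mem_filter, hi]
  have hne : ((List.finRange n).filter (fun k => decide (x k = y))).map a ≠ [] := by
    intro h
    rw [List.map_eq_nil_iff] at h
    rw [h] at hmem; simp at hmem
  calc ‖clusterOp a x y‖ ≤ (((((List.finRange n).filter (fun k => decide (x k = y)))).map a).map norm).prod :=
        List.norm_prod_le' hne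
    _ = ∏ k ∈ univ.filter (fun k => x k = y), ‖a k‖ := by
        rw [List.map_map, show (norm ∘ a) = (fun k => ‖a k‖) from rfl,
          prod_filter_finRange (fun k => decide (x k = y)) (fun k => ‖a k‖)]
        apply Finset.prod_congr _ (fun _ _ => rfl)
        ext k; simp


lemma image_cons {X : Type*} [DecidableEq X] {n : ℕ} (x : Fin (n+1) → X) :
    Finset.image x univ = insert (x 0) (Finset.image (x ∘ Fin.succ) univ) := by
  ext y
  simp only [Finset.mem_image, Finset.mem_insert, Finset.mem_univ, true_and, Function.comp]
  constructor
  · rintro ⟨i, rfl⟩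
    rcases Fin.eq_zero_or_eq_succ i with rfl | ⟨j, rfl⟩
    · exact Or.inl rfl
    · exact Or.inr ⟨j, rfl⟩
  · rintro (rfl | ⟨j, rfl⟩)
    · exact ⟨0, rfl⟩
    · exact ⟨j.succ, rfl⟩

lemma card_im_le (n k : ℕ) (X : Type*) [Fintype X] [DecidableEq X] :
    (univ.filter (fun x : Fin n → X => (Finset.image x univ).card = k)).card
      ≤ stirling n k * (Fintype.card X)^k := by
  induction n generalizing k with
  | zero =>
    cases k with
    | zero =>
      calc (univ.filter (fun x : Fin 0 → X => (Finset.image x univ).card = 0)).card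
          ≤ (univ : Finset (Fin 0 → X)).card := Finset.card_filter_le _ _
        _ = 1 := by simp [Finset.card_univ]
        _ ≤ _ := by simp [stirling]
    | succ k =>
      have : (univ.filter (fun x : Fin 0 → X => (Finset.image x univ).card = k + 1)) = ∅ := by
        apply Finset.filter_false_of_mem
        intro x _
        simp
      rw [this]
      exact Nat.zero_le _
  | succ n ih =>
    cases k with
    | zero =>
      have : (univ.filter (fun x : Fin (n+1) → X => (Finset.image x univ).card = 0)) = ∅ := by
        apply Finset.filter_false_of_mem
        intro x _
        have : x 0 ∈ Finset.image x univ := Finset.mem_image_of_mem x (Finset.mem_univ 0)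
        intro h
        rw [Finset.card_eq_zero] at h
        simp [h] at this
      rw [this]
      exact Nat.zero_le _
    | succ k =>
      set c := Fintype.card X with hc
      -- fiberwise decomposition along tail
      have hsplit : (univ.filter (fun x : Fin (n+1) → X => (Finset.image x univ).card = k+1)).card
          = ∑ x' : Fin n → X,
            (univ.filter (fun x : Fin (n+1) → X =>
              (x ∘ Fin.succ = x') ∧ (Finset.image x univ).card = k+1)).card := by
        rw [Finset.card_eq_sum_card_fiberwise
          (f := fun x : Fin (n+1) → X => x ∘ Fin.succ) (t := univ) (fun _ _ => Finset.mem_univ _)]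
        apply Finset.sum_congr rfl
        intro x' _
        congr 1
        ext x
        simp only [Finset.mem_filter, Finset.mem_univ, true_and]
        tauto
      have fiber_eq : ∀ x' : Fin n → X,
          (univ.filter (fun x : Fin (n+1) → X =>
            (x ∘ Fin.succ = x') ∧ (Finset.image x univ).card = k+1)).card
          = (univ.filter (fun x₀ : X =>
              (insert x₀ (Finset.image x' univ)).card = k+1)).card := by
        intro x'
        refine Finset.card_nbij' (fun x => x 0) (fun x₀ => Fin.cons x₀ x') ?_ ?_ ?_ ?_
        · intro x hx
          rw [Finset.mem_coe, Finset.mem_filter] at hx ⊢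
          obtain ⟨-, htail, hcard⟩ := hx
          refine ⟨Finset.mem_univ _, ?_⟩
          rw [← htail, ← image_cons, hcard]
        · intro x₀ hx₀
          rw [Finset.mem_coe, Finset.mem_filter] at hx₀ ⊢
          have htail : ((Fin.cons x₀ x' : Fin (n+1) → X) ∘ Fin.succ) = x' := by
            funext j; simp
          refine ⟨Finset.mem_univ _, htail, ?_⟩
          rw [image_cons, htail]
          simpa using hx₀.2
        · intro x hx
          rw [Finset.mem_coe, Finset.mem_filter] at hx
          have : Fin.cons (x 0) (x ∘ Fin.succ) = x := Fin.cons_self_tail x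
          rw [← hx.2.1]
          exact this
        · intro x₀ _
          simp
      have pointwise : ∀ x' : Fin n → X,
          (univ.filter (fun x₀ : X =>
              (insert x₀ (Finset.image x' univ)).card = k+1)).card
          ≤ (if (Finset.image x' univ).card = k+1 then k+1 else 0)
            + (if (Finset.image x' univ).card = k then c else 0) := by
        intro x'
        set s := Finset.image x' univ with hs
        by_cases h1 : s.card = k+1
        · have hsub : (univ.filter (fun x₀ : X => (insert x₀ s).card = k+1)) ⊆ s := by
            intro x₀ hx₀
            rw [Finset.mem_filter] at hx₀
            by_contra hmem
            rw [Finset.card_insert_of_notMem hmem, h1] at hx₀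
            omega
          calc _ ≤ s.card := Finset.card_le_card hsub
            _ ≤ _ := by rw [h1]; simp [h1]
        · by_cases h2 : s.card = k
          · calc _ ≤ (univ : Finset X).card := Finset.card_filter_le _ _
              _ ≤ _ := by simp [h1, h2, Finset.card_univ, hc]
          · have : (univ.filter (fun x₀ : X => (insert x₀ s).card = k+1)) = ∅ := by
              apply Finset.filter_false_of_mem
              intro x₀ _
              by_cases hmem : x₀ ∈ s
              · rw [Finset.card_insert_of_mem hmem]; exact h1
              · rw [Finset.card_insert_of_notMem hmem]; omega
            simp [this]
      calc (univ.filter (fun x : Fin (n+1) → X => (Finset.image x univ).card = k+1)).card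
          = ∑ x' : Fin n → X,
            (univ.filter (fun x₀ : X =>
              (insert x₀ (Finset.image x' univ)).card = k+1)).card := by
            rw [hsplit]; exact Finset.sum_congr rfl fun x' _ => fiber_eq x'
        _ ≤ ∑ x' : Fin n → X,
            ((if (Finset.image x' univ).card = k+1 then k+1 else 0)
              + (if (Finset.image x' univ).card = k then c else 0)) :=
            Finset.sum_le_sum fun x' _ => pointwise x'
        _ = (k+1) * (univ.filter (fun x' : Fin n → X => (Finset.image x' univ).card = k+1)).card
            + c * (univ.filter (fun x' : Fin n → X => (Finset.image x' univ).card = k)).card := by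
            rw [Finset.sum_add_distrib]
            congr 1
            · rw [← Finset.sum_filter]
              simp [Finset.sum_const, mul_comm]
            · rw [← Finset.sum_filter]
              simp [Finset.sum_const, mul_comm]
        _ ≤ (k+1) * (stirling n (k+1) * c^(k+1)) + c * (stirling n k * c^k) := by
            gcongr
            · exact ih (k+1)
            · exact ih k
        _ = stirling (n+1) (k+1) * c^(k+1) := by
            rw [show stirling (n+1) (k+1) = (k+1) * stirling n (k+1) + stirling n k from rfl]
            ring


lemma two_mul_card_Bset {n : ℕ} {f : Fin n → Fin n} (hinv : ∀ i, f (f i) = i)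
    (hfpf : ∀ i, f i ≠ i) :
    n = 2 * (univ.filter (fun i => i < f i)).card := by
  have key : (univ.filter (fun i : Fin n => ¬ i < f i)) = univ.filter (fun i => f i < i) := by
    ext i
    simp only [Finset.mem_filter, Finset.mem_univ, true_and, not_lt]
    constructor
    · intro h; exact lt_of_le_of_ne h (hfpf i)
    · intro h; exact h.le
  have hcard : (univ.filter (fun i : Fin n => f i < i)).card
      = (univ.filter (fun i : Fin n => i < f i)).card := by
    refine Finset.card_nbij' f f ?_ ?_ ?_ ?_
    · intro i hi
      rw [Finset.mem_coe, Finset.mem_filter] at hi ⊢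
      exact ⟨Finset.mem_univ _, by rw [hinv]; exact hi.2⟩
    · intro i hi
      rw [Finset.mem_coe, Finset.mem_filter] at hi ⊢
      exact ⟨Finset.mem_univ _, by rw [hinv]; exact hi.2⟩
    · intro i _; exact hinv i
    · intro i _; exact hinv i
  have := Finset.card_filter_add_card_filter_not
    (s := (univ : Finset (Fin n))) (p := fun i => i < f i)
  rw [key, hcard] at this
  have hn : (univ : Finset (Fin n)).card = n := by simp
  omega



lemma qfValue_eq {A : Type*} [NormedRing A] [NormedAlgebra ℂ A]
    (ω : A →ₗ[ℂ] ℂ) {n : ℕ} (a : Fin n → A) :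
    qfValue ω a =
      ∑ f ∈ (univ : Finset (Fin n → Fin n)).filter
          (fun f => (∀ i, f (f i) = i) ∧ ∀ i, f i ≠ i),
        ∏ i ∈ univ.filter (fun i => i < f i), ω (a i * a (f i)) := by
  unfold qfValue
  refine Finset.sum_bij' (fun σ _ => ⇑σ)
    (fun f hf => ⟨f, f, fun i => ?_, fun i => ?_⟩) ?_ ?_ ?_ ?_ ?_
  · exact (Finset.mem_filter.1 hf).2.1 i
  · exact (Finset.mem_filter.1 hf).2.1 i
  · intro σ hσ
    rw [Finset.mem_filter] at hσ ⊢
    refine ⟨Finset.mem_univ _, fun i => ?_, hσ.2.2⟩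
    have := congrArg (fun τ : Equiv.Perm (Fin n) => τ i) hσ.2.1
    simpa [Equiv.Perm.mul_apply] using this
  · intro f hf
    rw [Finset.mem_filter] at hf ⊢
    refine ⟨Finset.mem_univ _, ?_, hf.2.2⟩
    ext i
    simp [Equiv.Perm.mul_apply, hf.2.1 i]
  · intro σ _; exact Equiv.ext fun i => rfl
  · intro f _; rfl
  · intro σ _; rfl


section
variable {X : Type*} [Fintype X] [DecidableEq X] {n : ℕ}

-- G1 : fibers of a "Gf-type" map
lemma fiber_mem {f : Fin n → Fin n} (hinv : ∀ i, f (f i) = i) (hfpf : ∀ i, f i ≠ i)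
    {x : Fin n → X} (hx1 : ∀ i, x (f i) = x i)
    (hx2 : ∀ i j, i < f i → j < f j → x i = x j → i = j)
    (i k : Fin n) (hk : x k = x i) : k = i ∨ k = f i := by
  have hlt : ∀ m : Fin n, ¬ m < f m → f m < f (f m) := by
    intro m hm
    rw [hinv m]
    exact lt_of_le_of_ne (not_lt.1 hm) (hfpf m)
  by_cases hkk : k < f k
  · by_cases hii : i < f i
    · exact Or.inl (hx2 k i hkk hii hk)
    · refine Or.inr (hx2 k (f i) hkk (hlt i hii) ?_)
      rw [hx1 i]; exact hk
  · by_cases hii : i < f i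
    · have : f k = i := hx2 (f k) i (hlt k hkk) hii (by rw [hx1 k]; exact hk)
      refine Or.inr ?_
      rw [← this, hinv k]
    · have : f k = f i := hx2 (f k) (f i) (hlt k hkk) (hlt i hii)
        (by rw [hx1 k, hx1 i]; exact hk)
      have := congrArg f this
      rw [hinv, hinv] at this
      exact Or.inl this

lemma fiber_eq_pair {f : Fin n → Fin n} (hinv : ∀ i, f (f i) = i) (hfpf : ∀ i, f i ≠ i)
    {x : Fin n → X} (hx1 : ∀ i, x (f i) = x i)
    (hx2 : ∀ i j, i < f i → j < f j → x i = x j → i = j) (i : Fin n) :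
    univ.filter (fun k => x k = x i) = {i, f i} := by
  ext k
  simp only [Finset.mem_filter, Finset.mem_univ, true_and, Finset.mem_insert,
    Finset.mem_singleton]
  constructor
  · exact fiber_mem hinv hfpf hx1 hx2 i k
  · rintro (rfl | rfl)
    · rfl
    · exact hx1 i

end

section
variable {X : Type*} [Fintype X] [DecidableEq X] {n : ℕ}

def pm (x : Fin n → X) : Fin n → Fin n := fun i =>
  if h : ((univ.filter (fun k => x k = x i)).erase i).Nonempty
  then ((univ.filter (fun k => x k = x i)).erase i).min' h else i

lemma pm_spec {x : Fin n → X}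
    (hx : ∀ y ∈ Finset.image x univ, (univ.filter (fun k => x k = y)).card = 2) (i : Fin n) :
    pm x i ≠ i ∧ x (pm x i) = x i ∧ univ.filter (fun k => x k = x i) = {i, pm x i} := by
  have hcard : (univ.filter (fun k => x k = x i)).card = 2 :=
    hx (x i) (Finset.mem_image_of_mem x (Finset.mem_univ i))
  have hi : i ∈ univ.filter (fun k => x k = x i) := by simp
  have hcard1 : ((univ.filter (fun k => x k = x i)).erase i).card = 1 := by
    rw [Finset.card_erase_of_mem hi, hcard]
  obtain ⟨j, hj⟩ := Finset.card_eq_one.1 hcard1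
  have hne : ((univ.filter (fun k => x k = x i)).erase i).Nonempty := by
    rw [hj]; exact ⟨j, Finset.mem_singleton_self j⟩
  have hpm : pm x i = j := by
    unfold pm
    rw [dif_pos hne]
    have h5 : ((univ.filter (fun k => x k = x i)).erase i).min' hne ∈ ({j} : Finset (Fin n)) := by
      rw [← hj]
      exact Finset.min'_mem _ hne
    exact Finset.mem_singleton.1 h5
  have hjmem : j ∈ (univ.filter (fun k => x k = x i)).erase i := by
    rw [hj]; exact Finset.mem_singleton_self j
  have hji : j ≠ i := (Finset.mem_erase.1 hjmem).1
  have hxj : x j = x i := by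
    have := Finset.mem_of_mem_erase hjmem
    simpa using this
  refine ⟨hpm ▸ hji, hpm ▸ hxj, ?_⟩
  rw [hpm]
  refine (Finset.eq_of_subset_of_card_le ?_ ?_).symm
  · intro k hk
    rcases Finset.mem_insert.1 hk with rfl | hk
    · exact hi
    · rw [Finset.mem_singleton.1 hk]
      simp [hxj]
  · rw [hcard, Finset.card_pair (Ne.symm hji)]

lemma pm_invol {x : Fin n → X}
    (hx : ∀ y ∈ Finset.image x univ, (univ.filter (fun k => x k = y)).card = 2) (i : Fin n) :
    pm x (pm x i) = i := by
  obtain ⟨h1, h2, h3⟩ := pm_spec hx i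
  obtain ⟨h1', h2', h3'⟩ := pm_spec hx (pm x i)
  have hfil : univ.filter (fun k => x k = x (pm x i)) = univ.filter (fun k => x k = x i) := by
    apply Finset.filter_congr
    intro k _
    rw [h2]
  rw [hfil, h3] at h3'
  have : pm x (pm x i) ∈ ({i, pm x i} : Finset (Fin n)) := by
    rw [h3']
    exact Finset.mem_insert_of_mem (Finset.mem_singleton_self _)
  rcases Finset.mem_insert.1 this with h | h
  · exact h
  · exact absurd (Finset.mem_singleton.1 h) h1'

end


lemma sum_Gf {A : Type*} [NormedRing A] [NormedAlgebra ℂ A] (ω : A →ₗ[ℂ] ℂ)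
    {n : ℕ} (a : Fin n → A) {X : Type*} [Fintype X] [DecidableEq X]
    (f : Fin n → Fin n) (hinv : ∀ i, f (f i) = i) (hfpf : ∀ i, f i ≠ i) :
    ∑ x ∈ (univ : Finset (Fin n → X)).filter
        (fun x => (∀ i, x (f i) = x i) ∧ ∀ i j, i < f i → j < f j → x i = x j → i = j),
      ∏ y ∈ Finset.image x univ, ω (clusterOp a x y)
    = ((Fintype.card X).descFactorial ((univ.filter (fun i : Fin n => i < f i)).card) : ℂ)
        * ∏ i ∈ univ.filter (fun i : Fin n => i < f i), ω (a i * a (f i)) := by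
  classical
  have hlt : ∀ m : Fin n, ¬ m < f m → f m < m :=
    fun m hm => lt_of_le_of_ne (not_lt.1 hm) (hfpf m)
  set B := univ.filter (fun i : Fin n => i < f i) with hB
  set Gf := (univ : Finset (Fin n → X)).filter
      (fun x => (∀ i, x (f i) = x i) ∧ ∀ i j, i < f i → j < f j → x i = x j → i = j) with hGf
  have hTx : ∀ x ∈ Gf, (∏ y ∈ Finset.image x univ, ω (clusterOp a x y))
      = ∏ i ∈ B, ω (a i * a (f i)) := by
    intro x hxG
    obtain ⟨-, hx1, hx2⟩ := Finset.mem_filter.1 hxG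
    have him : Finset.image x univ = B.image x := by
      ext y
      simp only [Finset.mem_image, Finset.mem_univ, true_and, hB, Finset.mem_filter]
      constructor
      · rintro ⟨j, rfl⟩
        by_cases hj : j < f j
        · exact ⟨j, hj, rfl⟩
        · have hfj : f j < f (f j) := by rw [hinv]; exact hlt j hj
          exact ⟨f j, hfj, hx1 j⟩
      · rintro ⟨j, -, rfl⟩
        exact ⟨j, rfl⟩
    rw [him, Finset.prod_image ?_]
    · refine Finset.prod_congr rfl fun i hi => ?_
      have hii : i < f i := by simpa [hB] using hi
      rw [clusterOp_pair a x (x i) i (f i) hii (fiber_eq_pair hinv hfpf hx1 hx2 i)]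
    · intro i hi j hj hxij
      exact hx2 i j (by simpa [hB] using hi) (by simpa [hB] using hj) hxij
  rw [Finset.sum_congr rfl hTx, Finset.sum_const, nsmul_eq_mul]
  congr 2
  -- card Gf = descFactorial
  have e1 : Gf.card = (univ.filter (fun h : ↥B → X => Function.Injective h)).card := by
    refine Finset.card_nbij' (fun x => fun i : ↥B => x ↑i)
      (fun h => fun k => if hk : k < f k then h ⟨k, by simp [hB, hk]⟩
        else h ⟨f k, by simp only [hB, Finset.mem_filter, Finset.mem_univ, true_and, hinv]; exact hlt k hk⟩)
      ?_ ?_ ?_ ?_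
    · intro x hx
      obtain ⟨-, hx1, hx2⟩ := Finset.mem_filter.1 hx
      refine Finset.mem_filter.2 ⟨Finset.mem_univ _, ?_⟩
      rintro ⟨i₁, h₁⟩ ⟨i₂, h₂⟩ hv
      exact Subtype.ext (hx2 i₁ i₂ (by simpa [hB] using h₁) (by simpa [hB] using h₂) hv)
    · intro h hh
      have hinj : Function.Injective h := (Finset.mem_filter.1 hh).2
      refine Finset.mem_filter.2 ⟨Finset.mem_univ _, ?_, ?_⟩
      · intro i
        by_cases hi : i < f i
        · have hnfi : ¬ f i < f (f i) := by rw [hinv]; exact not_lt.2 hi.le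
          simp only [dif_pos hi, dif_neg hnfi]
          exact congrArg h (Subtype.ext (hinv i))
        · have hfi : f i < f (f i) := by rw [hinv]; exact hlt i hi
          simp only [dif_pos hfi, dif_neg hi]
      · intro i j hi hj hv
        simp only [dif_pos hi, dif_pos hj] at hv
        exact congrArg Subtype.val (hinj hv)
    · intro x hx
      obtain ⟨-, hx1, -⟩ := Finset.mem_filter.1 hx
      funext k
      by_cases hk : k < f k
      · simp only [dif_pos hk]
      · simp only [dif_neg hk]
        exact hx1 k
    · intro h _
      funext i
      obtain ⟨k, hk⟩ := i
      have hk' : k < f k := by simpa [hB] using hk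
      simp only [dif_pos hk']
  rw [e1, ← Fintype.card_subtype,
    Fintype.card_congr (Equiv.subtypeInjectiveEquivEmbedding ↥B X),
    Fintype.card_embedding_eq, Fintype.card_coe]


lemma main_id {A : Type*} [NormedRing A] [NormedAlgebra ℂ A] (ω : A →ₗ[ℂ] ℂ)
    {n : ℕ} (a : Fin n → A) (X : Type*) [Fintype X] [DecidableEq X] :
    ∑ x ∈ (univ : Finset (Fin n → X)).filter
        (fun x => ∀ y ∈ Finset.image x univ, (univ.filter (fun k => x k = y)).card = 2),
      ∏ y ∈ Finset.image x univ, ω (clusterOp a x y)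
    = ((Fintype.card X).descFactorial (n / 2) : ℂ) * qfValue ω a := by
  classical
  set T : (Fin n → X) → ℂ := fun x => ∏ y ∈ Finset.image x univ, ω (clusterOp a x y) with hT
  set P2s := (univ : Finset (Fin n → X)).filter
      (fun x => ∀ y ∈ Finset.image x univ, (univ.filter (fun k => x k = y)).card = 2) with hP2s
  have step1 : ∑ x ∈ P2s, T x
      = ∑ f : Fin n → Fin n, ∑ x ∈ P2s.filter (fun x => pm x = f), T x :=
    (Finset.sum_fiberwise P2s pm T).symm
  have step2 : ∑ f : Fin n → Fin n, ∑ x ∈ P2s.filter (fun x => pm x = f), T x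
      = ∑ f ∈ (univ : Finset (Fin n → Fin n)).filter
          (fun f => (∀ i, f (f i) = i) ∧ ∀ i, f i ≠ i),
          ∑ x ∈ P2s.filter (fun x => pm x = f), T x := by
    refine (Finset.sum_subset (Finset.subset_univ _) ?_).symm
    intro f _ hf
    have hempty : P2s.filter (fun x => pm x = f) = ∅ := by
      rw [Finset.filter_eq_empty_iff]
      intro x hx hpf
      apply hf
      have hx2 := (Finset.mem_filter.1 hx).2
      refine Finset.mem_filter.2 ⟨Finset.mem_univ _, fun i => ?_, fun i => ?_⟩
      · rw [← hpf]; exact pm_invol hx2 i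
      · rw [← hpf]; exact (pm_spec hx2 i).1
    rw [hempty, Finset.sum_empty]
  have step3 : ∀ f ∈ (univ : Finset (Fin n → Fin n)).filter
      (fun f => (∀ i, f (f i) = i) ∧ ∀ i, f i ≠ i),
      P2s.filter (fun x => pm x = f)
      = (univ : Finset (Fin n → X)).filter
        (fun x => (∀ i, x (f i) = x i) ∧ ∀ i j, i < f i → j < f j → x i = x j → i = j) := by
    intro f hf
    obtain ⟨-, hinv, hfpf⟩ := Finset.mem_filter.1 hf
    ext x
    simp only [hP2s, Finset.mem_filter, Finset.mem_univ, true_and]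
    constructor
    · rintro ⟨hx2, rfl⟩
      refine ⟨fun i => (pm_spec hx2 i).2.1, ?_⟩
      intro i j hi hj hxij
      have h3 := (pm_spec hx2 i).2.2
      have hjmem : j ∈ univ.filter (fun k => x k = x i) := by simp [hxij]
      rw [h3] at hjmem
      rcases Finset.mem_insert.1 hjmem with h | h
      · exact h.symm
      · exfalso
        have h' := Finset.mem_singleton.1 h
        have hji : pm x j = i := by rw [h']; exact pm_invol hx2 i
        rw [← h'] at hi
        have hj' : j < i := by rw [← hji]; exact hj
        exact absurd (hi.trans hj') (lt_irrefl i)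
    · rintro ⟨hx1, hx2⟩
      have hfib : ∀ i, univ.filter (fun k => x k = x i) = {i, f i} :=
        fiber_eq_pair hinv hfpf hx1 hx2
      have hP2 : ∀ y ∈ Finset.image x univ, (univ.filter (fun k => x k = y)).card = 2 := by
        intro y hy
        obtain ⟨i, -, rfl⟩ := Finset.mem_image.1 hy
        rw [hfib i]
        exact Finset.card_pair (Ne.symm (hfpf i))
      refine ⟨hP2, ?_⟩
      funext i
      have h3 := (pm_spec hP2 i).2.2
      rw [hfib i] at h3
      have hmem : pm x i ∈ ({i, f i} : Finset (Fin n)) := by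
        rw [h3]
        exact Finset.mem_insert_of_mem (Finset.mem_singleton_self _)
      rcases Finset.mem_insert.1 hmem with h | h
      · exact absurd h (pm_spec hP2 i).1
      · exact Finset.mem_singleton.1 h
  rw [step1, step2,
    Finset.sum_congr rfl (fun f hf => by
      obtain ⟨-, hinv, hfpf⟩ := Finset.mem_filter.1 hf
      rw [step3 f hf, hT, sum_Gf ω a f hinv hfpf]),
    qfValue_eq, Finset.mul_sum]
  refine Finset.sum_congr rfl fun f hf => ?_
  obtain ⟨-, hinv, hfpf⟩ := Finset.mem_filter.1 hf
  have h2m := two_mul_card_Bset hinv hfpf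
  have hm : (univ.filter (fun i : Fin n => i < f i)).card = n / 2 := by omega
  rw [hm]


section
variable {A : Type*} [NormedRing A] [NormedAlgebra ℂ A] (ω : A →ₗ[ℂ] ℂ)
  {n : ℕ} (a : Fin n → A) {X : Type*} [Fintype X] [DecidableEq X]

lemma T_zero (ha : ∀ i, ω (a i) = 0) (x : Fin n → X)
    (h : ∃ y ∈ Finset.image x univ, (univ.filter (fun k => x k = y)).card = 1) :
    ∏ y ∈ Finset.image x univ, ω (clusterOp a x y) = 0 := by
  obtain ⟨y, hy, h1⟩ := h
  obtain ⟨i, hi⟩ := Finset.card_eq_one.1 h1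
  refine Finset.prod_eq_zero hy ?_
  rw [clusterOp_single a x y i hi, ha i]

lemma T_bound (hω : ∀ b : A, ‖ω b‖ ≤ ‖b‖) (x : Fin n → X) :
    ‖∏ y ∈ Finset.image x univ, ω (clusterOp a x y)‖ ≤ ∏ i, ‖a i‖ := by
  rw [norm_prod]
  calc ∏ y ∈ Finset.image x univ, ‖ω (clusterOp a x y)‖
      ≤ ∏ y ∈ Finset.image x univ, ∏ k ∈ univ.filter (fun k => x k = y), ‖a k‖ := by
        refine Finset.prod_le_prod (fun _ _ => norm_nonneg _) ?_
        intro y hy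
        obtain ⟨i, -, hi⟩ := Finset.mem_image.1 hy
        exact (hω _).trans (norm_clusterOp_le a x y i hi)
    _ = ∏ i, ‖a i‖ :=
        Finset.prod_fiberwise_of_maps_to
          (fun i _ => Finset.mem_image_of_mem x (Finset.mem_univ i)) _

end

lemma S3_constraint {X : Type*} [Fintype X] [DecidableEq X] {n : ℕ} (x : Fin n → X)
    (h2 : ∀ y ∈ Finset.image x univ, 2 ≤ (univ.filter (fun k => x k = y)).card)
    (h3 : ∃ y ∈ Finset.image x univ, (univ.filter (fun k => x k = y)).card ≠ 2) :
    2 * (Finset.image x univ).card + 1 ≤ n := by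
  obtain ⟨y₀, hy₀, hne⟩ := h3
  have h3' : 3 ≤ (univ.filter (fun k => x k = y₀)).card := by
    have := h2 y₀ hy₀
    omega
  have hsum : n = ∑ y ∈ Finset.image x univ, (univ.filter (fun k => x k = y)).card := by
    have := Finset.card_eq_sum_card_fiberwise
      (f := x) (s := (univ : Finset (Fin n))) (t := Finset.image x univ)
      (fun i _ => Finset.mem_image_of_mem x (Finset.mem_univ i))
    simpa using this
  rw [← Finset.add_sum_erase _ _ hy₀] at hsum
  have hrest : 2 * ((Finset.image x univ).erase y₀).card
      ≤ ∑ y ∈ (Finset.image x univ).erase y₀, (univ.filter (fun k => x k = y)).card := by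
    have := Finset.card_nsmul_le_sum ((Finset.image x univ).erase y₀)
      (fun y => (univ.filter (fun k => x k = y)).card) 2
      (fun y hy => h2 y (Finset.mem_of_mem_erase hy))
    simpa [mul_comm] using this
  have hcard : ((Finset.image x univ).erase y₀).card = (Finset.image x univ).card - 1 :=
    Finset.card_erase_of_mem hy₀
  have hpos : 1 ≤ (Finset.image x univ).card := Finset.card_pos.2 ⟨y₀, hy₀⟩
  omega

end AuxStmt12

open Finset in
theorem stmt12 {A : Type*} [NormedRing A] [NormedAlgebra ℂ A]
    {X : Type*} [Fintype X] [DecidableEq X]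
    (ω : A →ₗ[ℂ] ℂ) (hω : ∀ a : A, ‖ω a‖ ≤ ‖a‖)
    (n : ℕ) (hn : 1 ≤ n) (a : Fin n → A) (ha : ∀ i, ω (a i) = 0)
    (hX : n ≤ Fintype.card X) :
    ‖prodMoment (X := X) ω a -
        ((∏ l ∈ Finset.range (n / 2), (1 - (l : ℝ) / (Fintype.card X : ℝ)) : ℝ) : ℂ) *
          qfValue ω a‖ ≤
      (Fintype.card X : ℝ) ^ (-(1 : ℝ) / 2) * (∏ i, ‖a i‖) *
        ∑ k ∈ Finset.Icc 1 n, (stirling n k : ℝ) * (if 2 * k + 1 ≤ n then 1 else 0) := by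
  classical
  set c : ℝ := (Fintype.card X : ℝ) with hcdef
  have hc1 : (1 : ℝ) ≤ c := by
    rw [hcdef]
    exact_mod_cast le_trans hn hX
  have hc0 : (0 : ℝ) < c := lt_of_lt_of_le zero_lt_one hc1
  set B : ℝ := ∏ i, ‖a i‖ with hBdef
  have hB0 : 0 ≤ B := Finset.prod_nonneg (fun i _ => norm_nonneg _)
  set T : (Fin n → X) → ℂ := fun x => ∏ y ∈ Finset.image x univ, ω (clusterOp a x y) with hT
  set P1 : (Fin n → X) → Prop :=
    fun x => ∃ y ∈ Finset.image x univ, (univ.filter (fun k => x k = y)).card = 1 with hP1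
  set P2 : (Fin n → X) → Prop :=
    fun x => ∀ y ∈ Finset.image x univ, (univ.filter (fun k => x k = y)).card = 2 with hP2
  set r : ℝ := c ^ (-(n : ℝ) / 2) with hrdef
  have hr0 : 0 ≤ r := Real.rpow_nonneg hc0.le _
  -- split the sum
  have hsplit : ∑ x : Fin n → X, T x
      = (∑ x ∈ univ.filter P2, T x)
        + ∑ x ∈ univ.filter (fun x => ¬ P2 x ∧ ¬ P1 x), T x := by
    rw [← Finset.sum_filter_add_sum_filter_not univ P2 T]
    congr 1
    rw [← Finset.sum_filter_add_sum_filter_not (univ.filter (fun x => ¬ P2 x)) P1 T,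
      Finset.filter_filter, Finset.filter_filter]
    have hz : ∑ x ∈ univ.filter (fun x => ¬ P2 x ∧ P1 x), T x = 0 := by
      refine Finset.sum_eq_zero fun x hx => ?_
      exact T_zero ω a ha x (Finset.mem_filter.1 hx).2.2
    rw [hz, zero_add]
  -- the main coefficient
  have hMain : (↑r : ℂ) * (((Fintype.card X).descFactorial (n / 2) : ℂ) * qfValue ω a)
      - ((∏ l ∈ Finset.range (n / 2), (1 - (l : ℝ) / c) : ℝ) : ℂ) * qfValue ω a = 0 := by
    rcases Nat.even_or_odd n with he | ho
    · have heven : 2 * (n / 2) = n := by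
        obtain ⟨m, hm⟩ := he; omega
      have hd : (((Fintype.card X).descFactorial (n / 2) : ℕ) : ℝ)
          = ∏ l ∈ Finset.range (n / 2), (c - l) := by
        rw [Nat.descFactorial_eq_prod_range, Nat.cast_prod]
        refine Finset.prod_congr rfl fun l hl => ?_
        have hl' : l ≤ Fintype.card X := by
          have := Finset.mem_range.1 hl
          omega
        rw [Nat.cast_sub hl']
      have hr' : r = (c ^ (n / 2 : ℕ))⁻¹ := by
        rw [hrdef, ← Real.rpow_natCast c (n / 2), ← Real.rpow_neg hc0.le]
        congr 1
        have : ((2 * (n / 2) : ℕ) : ℝ) = (n : ℝ) := by exact_mod_cast congrArg Nat.cast heven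
        push_cast at this ⊢
        linarith
      have hcoef : r * (((Fintype.card X).descFactorial (n / 2) : ℕ) : ℝ)
          = ∏ l ∈ Finset.range (n / 2), (1 - (l : ℝ) / c) := by
        rw [hr', hd]
        have : ∀ l ∈ Finset.range (n / 2), (1 - (l : ℝ) / c) = (c - l) / c := by
          intro l _
          field_simp
        rw [Finset.prod_congr rfl this, Finset.prod_div_distrib, Finset.prod_const,
          Finset.card_range]
        ring
      rw [sub_eq_zero, ← mul_assoc]
      congr 1
      rw [← hcoef]
      push_cast
      ring
    · have hq0 : qfValue ω a = 0 := by
        rw [qfValue_eq]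
        have : (univ : Finset (Fin n → Fin n)).filter
            (fun f => (∀ i, f (f i) = i) ∧ ∀ i, f i ≠ i) = ∅ := by
          rw [Finset.filter_eq_empty_iff]
          rintro f - ⟨hinv, hfpf⟩
          have := two_mul_card_Bset hinv hfpf
          obtain ⟨m, hm⟩ := ho
          omega
        rw [this, Finset.sum_empty]
      rw [hq0]
      ring
  -- reduce to the error term
  have hdiff : prodMoment (X := X) ω a -
      ((∏ l ∈ Finset.range (n / 2), (1 - (l : ℝ) / c) : ℝ) : ℂ) * qfValue ω a
      = (↑r : ℂ) * ∑ x ∈ univ.filter (fun x => ¬ P2 x ∧ ¬ P1 x), T x := by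
    rw [prodMoment]
    rw [show ∑ x : Fin n → X, ∏ y ∈ Finset.image x Finset.univ, ω (clusterOp a x y)
        = ∑ x : Fin n → X, T x from rfl, hsplit]
    rw [show ∑ x ∈ univ.filter P2, T x
        = ((Fintype.card X).descFactorial (n / 2) : ℂ) * qfValue ω a from main_id ω a X]
    rw [mul_add]
    rw [show (((c ^ (-(n : ℝ) / 2) : ℝ)) : ℂ) = (↑r : ℂ) from rfl]
    rw [sub_eq_iff_eq_add']
    rw [show ((∏ l ∈ Finset.range (n / 2), (1 - (l : ℝ) / c) : ℝ) : ℂ) * qfValue ω a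
        = (↑r : ℂ) * (((Fintype.card X).descFactorial (n / 2) : ℂ) * qfValue ω a) from
        by have := hMain; linear_combination -this]
  rw [hdiff]
  -- bound the error term
  rw [norm_mul]
  have habs_r : ‖(↑r : ℂ)‖ = r := by
    rw [Complex.norm_of_nonneg hr0]
  rw [habs_r]
  set S3 := univ.filter (fun x : Fin n → X => ¬ P2 x ∧ ¬ P1 x) with hS3
  have hEsum : ‖∑ x ∈ S3, T x‖ ≤ ∑ x ∈ S3, ‖T x‖ :=
    norm_sum_le _ _
  have hgroup : ∑ x ∈ S3, ‖T x‖
      = ∑ k ∈ Finset.Icc 1 n, ∑ x ∈ S3.filter (fun x => (Finset.image x univ).card = k),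
          ‖T x‖ := by
    refine (Finset.sum_fiberwise_of_maps_to ?_ _).symm
    intro x _
    rw [Finset.mem_Icc]
    constructor
    · refine Finset.card_pos.2 ⟨x ⟨0, hn⟩, Finset.mem_image_of_mem x (Finset.mem_univ _)⟩
    · calc (Finset.image x univ).card ≤ (univ : Finset (Fin n)).card := Finset.card_image_le
        _ = n := by simp
  have hperk : ∀ k ∈ Finset.Icc 1 n,
      ∑ x ∈ S3.filter (fun x => (Finset.image x univ).card = k), ‖T x‖
      ≤ (if 2 * k + 1 ≤ n then (stirling n k : ℝ) * (Fintype.card X)^k else 0) * B := by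
    intro k _
    by_cases hk : 2 * k + 1 ≤ n
    · rw [if_pos hk]
      calc ∑ x ∈ S3.filter (fun x => (Finset.image x univ).card = k), ‖T x‖
          ≤ ∑ x ∈ S3.filter (fun x => (Finset.image x univ).card = k), B :=
            Finset.sum_le_sum fun x _ => T_bound ω a hω x
        _ = (S3.filter (fun x => (Finset.image x univ).card = k)).card * B := by
            rw [Finset.sum_const, nsmul_eq_mul]
        _ ≤ ((stirling n k : ℝ) * (Fintype.card X)^k) * B := by
            refine mul_le_mul_of_nonneg_right ?_ hB0
            have hsub : S3.filter (fun x => (Finset.image x univ).card = k)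
                ⊆ univ.filter (fun x : Fin n → X => (Finset.image x univ).card = k) := by
              intro x hx
              rw [Finset.mem_filter] at hx ⊢
              exact ⟨Finset.mem_univ _, hx.2⟩
            have := le_trans (Finset.card_le_card hsub) (card_im_le n k X)
            calc ((S3.filter (fun x => (Finset.image x univ).card = k)).card : ℝ)
                ≤ ((stirling n k * (Fintype.card X)^k : ℕ) : ℝ) := by exact_mod_cast this
              _ = (stirling n k : ℝ) * (Fintype.card X)^k := by push_cast; ring
    · rw [if_neg hk]
      have hempty : S3.filter (fun x => (Finset.image x univ).card = k) = ∅ := by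
        rw [Finset.filter_eq_empty_iff]
        intro x hx hcard
        obtain ⟨-, hnp2, hnp1⟩ := Finset.mem_filter.1 hx
        apply hk
        rw [← hcard]
        refine S3_constraint x ?_ ?_
        · intro y hy
          obtain ⟨i, -, hi⟩ := Finset.mem_image.1 hy
          have hpos : 1 ≤ (univ.filter (fun kk => x kk = y)).card :=
            Finset.card_pos.2 ⟨i, by simp [hi]⟩
          have hne1 : (univ.filter (fun kk => x kk = y)).card ≠ 1 := by
            intro h1
            exact hnp1 ⟨y, hy, h1⟩
          omega
        · by_contra hall
          push_neg at hall
          exact hnp2 fun y hy => hall y hy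
      rw [hempty]
      simp
  -- final numeric comparison
  calc r * ‖∑ x ∈ S3, T x‖
      ≤ r * ∑ k ∈ Finset.Icc 1 n,
          (if 2 * k + 1 ≤ n then (stirling n k : ℝ) * (Fintype.card X)^k else 0) * B := by
        refine mul_le_mul_of_nonneg_left ?_ hr0
        rw [hgroup] at hEsum
        exact le_trans hEsum (Finset.sum_le_sum hperk)
    _ ≤ ∑ k ∈ Finset.Icc 1 n,
          c ^ (-(1:ℝ)/2) * B * ((stirling n k : ℝ) * (if 2 * k + 1 ≤ n then 1 else 0)) := by
        rw [Finset.mul_sum]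
        refine Finset.sum_le_sum fun k _ => ?_
        by_cases hk : 2 * k + 1 ≤ n
        · rw [if_pos hk, if_pos hk]
          have hrc : r * (Fintype.card X : ℝ)^k ≤ c ^ (-(1:ℝ)/2) := by
            have h1 : r * (Fintype.card X : ℝ)^k = c ^ ((k : ℝ) - (n : ℝ)/2) := by
              rw [hrdef, ← Real.rpow_natCast c k, ← Real.rpow_add hc0]
              congr 1
              ring
            rw [h1]
            refine Real.rpow_le_rpow_of_exponent_le hc1 ?_
            have : (2 * k + 1 : ℝ) ≤ (n : ℝ) := by exact_mod_cast hk
            linarith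
          calc r * ((stirling n k : ℝ) * (Fintype.card X)^k * B)
              = (r * (Fintype.card X : ℝ)^k) * ((stirling n k : ℝ) * B) := by ring
            _ ≤ c ^ (-(1:ℝ)/2) * ((stirling n k : ℝ) * B) := by
                refine mul_le_mul_of_nonneg_right hrc ?_
                positivity
            _ = c ^ (-(1:ℝ)/2) * B * ((stirling n k : ℝ) * 1) := by ring
        · rw [if_neg hk, if_neg hk]
          simp
    _ = c ^ (-(1:ℝ)/2) * B * ∑ k ∈ Finset.Icc 1 n,
          (stirling n k : ℝ) * (if 2 * k + 1 ≤ n then 1 else 0) := by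
        rw [Finset.mul_sum]
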